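/- arXiv:2010.02521 — 2 statements merged into one kernel-verified Lean document; each statement's English description precedes it below -/
import Mathlib

section
/- Suppose the covariate-shift setting: (Y,X) | S=s has density p_s(x) q(y|x), so the conditional law of Y given X is the same under S=0 and S=1. If ω(x) equals the true density ratio p0(x)/p1(x), then the population augmented estimating function E_1[ω(X) A (Y − m(X))] + E_0[A (m(X) − g(Aᵀβ))] equals E_0[A (Y − g(Aᵀβ))] for every measurable function m, and hence β0 (defined by E_0[A(Y − g(Aᵀβ0))] = 0) solves the augmented equation. -/
open MeasureTheory

/-- In the covariate-shift setting, the joint law `ν0` of `(X, Y)` in the target population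
is the `ω(X)`-tilt of the source joint law `ν1` (this encodes both that the conditional law
of `Y` given `X` is shared and that `ω` is the true density ratio `p0/p1`).  Then for every
imputation function `m` and every `β`, the population augmented estimating function
`E_1[ω(X) A (Y − m(X))] + E_0[A (m(X) − g(Aᵀβ))]` equals `E_0[A (Y − g(Aᵀβ))]`; hence any
`β0` solving `E_0[A (Y − g(Aᵀβ0))] = 0` also solves the augmented equation. -/
theorem stmt_1 {𝒳 : Type*} [MeasurableSpace 𝒳] {d : ℕ}
    (ν1 ν0 : Measure (𝒳 × ℝ)) [IsProbabilityMeasure ν1] [IsProbabilityMeasure ν0]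
    (ω : 𝒳 → ℝ) (hωmeas : Measurable ω) (hωnonneg : ∀ x, 0 ≤ ω x)
    (hratio : ν0 = ν1.withDensity (fun q => ENNReal.ofReal (ω q.1)))
    (A : 𝒳 → Fin d → ℝ) (g : ℝ → ℝ) (m : 𝒳 → ℝ)
    (hint1 : ∀ β : Fin d → ℝ,
      Integrable (fun q : 𝒳 × ℝ => (ω q.1 * (q.2 - m q.1)) • A q.1) ν1)
    (hint0 : ∀ β : Fin d → ℝ,
      Integrable (fun q : 𝒳 × ℝ => (m q.1 - g (∑ i, A q.1 i * β i)) • A q.1) ν0)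
    (hint0' : ∀ β : Fin d → ℝ,
      Integrable (fun q : 𝒳 × ℝ => (q.2 - g (∑ i, A q.1 i * β i)) • A q.1) ν0)
    (β0 : Fin d → ℝ) :
    (∀ β : Fin d → ℝ,
      ((∫ q : 𝒳 × ℝ, (ω q.1 * (q.2 - m q.1)) • A q.1 ∂ν1)
        + ∫ q : 𝒳 × ℝ, (m q.1 - g (∑ i, A q.1 i * β i)) • A q.1 ∂ν0)
      = ∫ q : 𝒳 × ℝ, (q.2 - g (∑ i, A q.1 i * β i)) • A q.1 ∂ν0)
    ∧ ((∫ q : 𝒳 × ℝ, (q.2 - g (∑ i, A q.1 i * β0 i)) • A q.1 ∂ν0) = 0 →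
      ((∫ q : 𝒳 × ℝ, (ω q.1 * (q.2 - m q.1)) • A q.1 ∂ν1)
        + ∫ q : 𝒳 × ℝ, (m q.1 - g (∑ i, A q.1 i * β0 i)) • A q.1 ∂ν0) = 0) := by
  have key : ∀ β : Fin d → ℝ,
      ((∫ q : 𝒳 × ℝ, (ω q.1 * (q.2 - m q.1)) • A q.1 ∂ν1)
        + ∫ q : 𝒳 × ℝ, (m q.1 - g (∑ i, A q.1 i * β i)) • A q.1 ∂ν0)
      = ∫ q : 𝒳 × ℝ, (q.2 - g (∑ i, A q.1 i * β i)) • A q.1 ∂ν0 := by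
    intro β
    have h1 : (∫ q : 𝒳 × ℝ, (ω q.1 * (q.2 - m q.1)) • A q.1 ∂ν1)
        = ∫ q : 𝒳 × ℝ, (q.2 - m q.1) • A q.1 ∂ν0 := by
      rw [hratio]
      have := integral_withDensity_eq_integral_smul (μ := ν1)
        (f := fun q : 𝒳 × ℝ => (ω q.1).toNNReal)
        ((hωmeas.comp measurable_fst).real_toNNReal)
        (fun q : 𝒳 × ℝ => (q.2 - m q.1) • A q.1)
      simp only [ENNReal.ofReal] at *
      rw [this]
      congr 1
      ext q
      rw [NNReal.smul_def, Real.coe_toNNReal _ (hωnonneg q.1), smul_smul]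
    have hym : Integrable (fun q : 𝒳 × ℝ => (q.2 - m q.1) • A q.1) ν0 := by
      have := (hint0' β).sub (hint0 β)
      convert this using 1
      case e'_2 => rfl
      ext q
      simp [← sub_smul]
      ring_nf
    rw [h1, ← integral_add hym (hint0 β)]
    congr 1
    ext q
    rw [← add_smul]
    ring_nf
  refine ⟨key, fun h => ?_⟩
  rw [key β0, h]
end

section
/- In the covariate-shift setting where the conditional law of Y given X is shared across populations, if the imputation model is correct, i.e. m(X) = μ(X) := E(Y|X), then for any nonnegative integrable weight function ω, the population augmented estimating function E_1[ω(X) A (Y − m(X))] + E_0[A (m(X) − g(Aᵀβ))] equals E_0[A (Y − g(Aᵀβ))]; hence β0 solves the augmented equation even when ω is mis-specified. -/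
open MeasureTheory

lemma coord_int {α : Type*} [MeasurableSpace α] {d : ℕ} (μ : Measure α)
    (f : α → Fin d → ℝ) (hf : Integrable f μ) (i : Fin d) :
    Integrable (fun x => f x i) μ ∧ (∫ x, f x ∂μ) i = ∫ x, f x i ∂μ := by
  let L : (Fin d → ℝ) →L[ℝ] ℝ := ContinuousLinearMap.proj i
  refine ⟨L.integrable_comp hf, ?_⟩
  have := L.integral_comp_comm hf
  simpa [L] using this.symm

/-- If the imputation model is correct, `m(X) = E(Y | X)` under both the source (`ν1`) and
target (`ν0`) joint laws of `(X, Y)` (expressed via the defining property of conditional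
expectation: weighted residuals of `Y − m(X)` against any function of `X` have mean zero),
then for any nonnegative weight function `ω` the population augmented estimating function
equals `E_0[A (Y − g(Aᵀβ))]`; hence `β0` solving `E_0[A (Y − g(Aᵀβ0))] = 0` solves the
augmented equation even when `ω` is mis-specified. -/
theorem stmt_2 {𝒳 : Type*} [MeasurableSpace 𝒳] {d : ℕ}
    (ν1 ν0 : Measure (𝒳 × ℝ)) [IsProbabilityMeasure ν1] [IsProbabilityMeasure ν0]
    (m : 𝒳 → ℝ)
    (hm1 : ∀ W : 𝒳 → ℝ, Measurable W →
      Integrable (fun q : 𝒳 × ℝ => W q.1 * (q.2 - m q.1)) ν1 →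
      ∫ q : 𝒳 × ℝ, W q.1 * (q.2 - m q.1) ∂ν1 = 0)
    (hm0 : ∀ W : 𝒳 → ℝ, Measurable W →
      Integrable (fun q : 𝒳 × ℝ => W q.1 * (q.2 - m q.1)) ν0 →
      ∫ q : 𝒳 × ℝ, W q.1 * (q.2 - m q.1) ∂ν0 = 0)
    (ω : 𝒳 → ℝ) (hωmeas : Measurable ω) (hωnonneg : ∀ x, 0 ≤ ω x)
    (A : 𝒳 → Fin d → ℝ) (hAmeas : Measurable A) (g : ℝ → ℝ)
    (hint1 : Integrable (fun q : 𝒳 × ℝ => (ω q.1 * (q.2 - m q.1)) • A q.1) ν1)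
    (hint0 : ∀ β : Fin d → ℝ,
      Integrable (fun q : 𝒳 × ℝ => (m q.1 - g (∑ i, A q.1 i * β i)) • A q.1) ν0)
    (hint0' : ∀ β : Fin d → ℝ,
      Integrable (fun q : 𝒳 × ℝ => (q.2 - g (∑ i, A q.1 i * β i)) • A q.1) ν0)
    (β0 : Fin d → ℝ) :
    (∀ β : Fin d → ℝ,
      ((∫ q : 𝒳 × ℝ, (ω q.1 * (q.2 - m q.1)) • A q.1 ∂ν1)
        + ∫ q : 𝒳 × ℝ, (m q.1 - g (∑ i, A q.1 i * β i)) • A q.1 ∂ν0)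
      = ∫ q : 𝒳 × ℝ, (q.2 - g (∑ i, A q.1 i * β i)) • A q.1 ∂ν0)
    ∧ ((∫ q : 𝒳 × ℝ, (q.2 - g (∑ i, A q.1 i * β0 i)) • A q.1 ∂ν0) = 0 →
      ((∫ q : 𝒳 × ℝ, (ω q.1 * (q.2 - m q.1)) • A q.1 ∂ν1)
        + ∫ q : 𝒳 × ℝ, (m q.1 - g (∑ i, A q.1 i * β0 i)) • A q.1 ∂ν0) = 0) := by
  -- First integral is zero.
  have h1 : (∫ q : 𝒳 × ℝ, (ω q.1 * (q.2 - m q.1)) • A q.1 ∂ν1) = 0 := by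
    funext i
    obtain ⟨hi, he⟩ := coord_int ν1 _ hint1 i
    have hW : Measurable (fun x : 𝒳 => ω x * A x i) :=
      hωmeas.mul ((measurable_pi_apply i).comp hAmeas)
    have hi' : Integrable (fun q : 𝒳 × ℝ => (ω q.1 * A q.1 i) * (q.2 - m q.1)) ν1 := by
      convert hi using 2 with q
      simp [Pi.smul_apply, smul_eq_mul]; ring
    have := hm1 _ hW hi'
    rw [Pi.zero_apply, he, ← this]
    congr 1; funext q; simp [Pi.smul_apply, smul_eq_mul]; ring
  have key : ∀ β : Fin d → ℝ,
      (∫ q : 𝒳 × ℝ, (m q.1 - g (∑ i, A q.1 i * β i)) • A q.1 ∂ν0)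
        = ∫ q : 𝒳 × ℝ, (q.2 - g (∑ i, A q.1 i * β i)) • A q.1 ∂ν0 := by
    intro β
    have hdiff : Integrable (fun q : 𝒳 × ℝ => (q.2 - m q.1) • A q.1) ν0 := by
      have := (hint0' β).sub (hint0 β)
      convert this using 2 with q
      case e'_2 => rfl
      funext i; simp [Pi.smul_apply, smul_eq_mul]; ring
    have hzero : (∫ q : 𝒳 × ℝ, (q.2 - m q.1) • A q.1 ∂ν0) = 0 := by
      funext i
      obtain ⟨hi, he⟩ := coord_int ν0 _ hdiff i
      have hW : Measurable (fun x : 𝒳 => A x i) := (measurable_pi_apply i).comp hAmeas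
      have hi' : Integrable (fun q : 𝒳 × ℝ => A q.1 i * (q.2 - m q.1)) ν0 := by
        convert hi using 2 with q
        simp [Pi.smul_apply, smul_eq_mul]; ring
      have := hm0 _ hW hi'
      rw [Pi.zero_apply, he, ← this]
      congr 1; funext q; simp [Pi.smul_apply, smul_eq_mul]; ring
    have : (∫ q : 𝒳 × ℝ, (q.2 - g (∑ i, A q.1 i * β i)) • A q.1 ∂ν0)
        = (∫ q : 𝒳 × ℝ, (m q.1 - g (∑ i, A q.1 i * β i)) • A q.1 ∂ν0)
          + ∫ q : 𝒳 × ℝ, (q.2 - m q.1) • A q.1 ∂ν0 := by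
      rw [← integral_add (hint0 β) hdiff]
      congr 1; funext q; funext i
      simp [Pi.smul_apply, smul_eq_mul]; ring
    rw [this, hzero, add_zero]
  refine ⟨fun β => by rw [h1, zero_add, key β], fun h => by rw [h1, zero_add, key β0, h]⟩
end
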